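/- Let A, B be positive definite d×d matrices, M invertible, ε > 0. Then M^{-1} A^{-1} (A M B Mᵀ + (ε²/4)I)^{1/2} A M = (B Mᵀ A M + (ε²/4)I)^{1/2}, where both square roots are defined by conjugation (for the left side by A^{1/2}, for the right side by B^{1/2}); in particular tr((A M B Mᵀ + (ε²/4)I)^{1/2}) = tr((B Mᵀ A M + (ε²/4)I)^{1/2}). -/

import Mathlib

open Matrix

open Classical in
/-- The positive semidefinite square root (zero if not positive semidefinite). -/
noncomputable def psqrt {d : ℕ} (X : Matrix (Fin d) (Fin d) ℝ) : Matrix (Fin d) (Fin d) ℝ :=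
  if h : X.PosSemidef then
    h.1.eigenvectorUnitary.1 * diagonal ((↑) ∘ (√·) ∘ h.1.eigenvalues) *
      (star h.1.eigenvectorUnitary : Matrix (Fin d) (Fin d) ℝ)
  else 0

theorem comm_inv {d : ℕ} {X W : Matrix (Fin d) (Fin d) ℝ} (hU : IsUnit X.det)
    (h : W * X = X * W) : W * X⁻¹ = X⁻¹ * W := by
  have h1 := nonsing_inv_mul X hU
  have h2 := mul_nonsing_inv X hU
  have e : X⁻¹ * (W * X) * X⁻¹ = X⁻¹ * W := by
    rw [mul_assoc X⁻¹ (W * X) X⁻¹, mul_assoc W X X⁻¹, h2, mul_one]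
  have e2 : X⁻¹ * (X * W) * X⁻¹ = W * X⁻¹ := by
    rw [← mul_assoc X⁻¹ X W, h1, one_mul]
  rw [← e2, ← h, e]

namespace Matrix.PosSemidef

noncomputable def sqrt {d : ℕ} {X : Matrix (Fin d) (Fin d) ℝ} (h : X.PosSemidef) :
    Matrix (Fin d) (Fin d) ℝ :=
  h.1.eigenvectorUnitary.1 * diagonal ((↑) ∘ (√·) ∘ h.1.eigenvalues) *
    (star h.1.eigenvectorUnitary : Matrix (Fin d) (Fin d) ℝ)

open scoped MatrixOrder in
theorem sqrt_eq_cfcsqrt {d : ℕ} {X : Matrix (Fin d) (Fin d) ℝ} (h : X.PosSemidef) :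
    h.sqrt = CFC.sqrt X := by
  rw [CFC.sqrt_eq_cfc, cfc_nnreal_eq_real _ X, h.1.cfc_eq]
  simp only [IsHermitian.cfc, Unitary.conjStarAlgAut_apply, sqrt]
  congr 3
  funext i
  simp [Real.coe_sqrt, max_eq_left (h.eigenvalues_nonneg i)]

open scoped MatrixOrder in
theorem sqrt_mul_self {d : ℕ} {X : Matrix (Fin d) (Fin d) ℝ} (h : X.PosSemidef) :
    h.sqrt * h.sqrt = X := by
  rw [sqrt_eq_cfcsqrt]; exact CFC.sqrt_mul_sqrt_self X h.nonneg

open scoped MatrixOrder in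
theorem posSemidef_sqrt {d : ℕ} {X : Matrix (Fin d) (Fin d) ℝ} (h : X.PosSemidef) :
    h.sqrt.PosSemidef := by
  rw [sqrt_eq_cfcsqrt]; exact nonneg_iff_posSemidef.mp (CFC.sqrt_nonneg X)

open scoped MatrixOrder in
theorem eq_sqrt_of_sq_eq {d : ℕ} {X Y : Matrix (Fin d) (Fin d) ℝ} (hY : Y.PosSemidef)
    (hX : X.PosSemidef) (h : Y ^ 2 = X) : Y = hX.sqrt := by
  rw [sqrt_eq_cfcsqrt, eq_comm, CFC.sqrt_eq_iff X Y hX.nonneg hY.nonneg, ← sq, h]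

end Matrix.PosSemidef

theorem key {d : ℕ} (N : Matrix (Fin d) (Fin d) ℝ) (hN : IsUnit N.det) (c : ℝ) (hc : 0 < c)
    (hG : (Nᵀ * N).PosDef)
    (hP : (Nᵀ * N + c • 1).PosSemidef) (hQ : (N * Nᵀ + c • 1).PosSemidef) :
    N * hP.sqrt = hQ.sqrt * N := by
  have hNi1 : N⁻¹ * N = 1 := nonsing_inv_mul N hN
  have hNi2 : N * N⁻¹ = 1 := mul_nonsing_inv N hN
  have hGU : IsUnit (Nᵀ * N).det := hG.det_pos.ne'.isUnit
  have hGi1 : (Nᵀ * N)⁻¹ * (Nᵀ * N) = 1 := nonsing_inv_mul _ hGU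
  set s := hP.sqrt with hsdef
  set w := hP.posSemidef_sqrt.sqrt with hwdef
  have hss : s * s = Nᵀ * N + c • 1 := hP.sqrt_mul_self
  have hww : w * w = s := hP.posSemidef_sqrt.sqrt_mul_self
  have hwH : wᵀ = w := by
    rw [← conjTranspose_eq_transpose_of_trivial]; exact hP.posSemidef_sqrt.posSemidef_sqrt.1
  have hX : Nᵀ * N = s * s - c • 1 := eq_sub_of_add_eq hss.symm
  have hws : w * s = s * w := by rw [← hww, mul_assoc, ← mul_assoc]
  have hwss : w * (s * s) = s * s * w := by
    rw [← mul_assoc, hws, mul_assoc, hws, mul_assoc]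
  have hwX : w * (Nᵀ * N) = (Nᵀ * N) * w := by
    rw [hX, mul_sub, sub_mul, hwss, mul_smul_comm, smul_mul_assoc, mul_one, one_mul]
  have hsss : s * (s * s) = s * s * s := by rw [mul_assoc]
  have hsX : s * (Nᵀ * N) = (Nᵀ * N) * s := by
    rw [hX, mul_sub, sub_mul, hsss, mul_smul_comm, smul_mul_assoc, mul_one, one_mul]
  have hwXi : w * (Nᵀ * N)⁻¹ = (Nᵀ * N)⁻¹ * w := comm_inv hGU hwX
  have hsXi : s * (Nᵀ * N)⁻¹ = (Nᵀ * N)⁻¹ * s := comm_inv hGU hsX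
  have hNinv : N⁻¹ = (Nᵀ * N)⁻¹ * Nᵀ := by
    refine inv_eq_left_inv ?_
    rw [mul_assoc, hGi1]
  set Y := N * s * N⁻¹ with hYdef
  have hYform : Y = (N * w) * (Nᵀ * N)⁻¹ * (N * w)ᴴ := by
    rw [hYdef, hNinv, conjTranspose_mul, conjTranspose_eq_transpose_of_trivial,
      conjTranspose_eq_transpose_of_trivial, hwH]
    have hcenter : s * (Nᵀ * N)⁻¹ = w * ((Nᵀ * N)⁻¹ * w) := by
      rw [← hwXi, ← mul_assoc, hww]
    calc N * s * ((Nᵀ * N)⁻¹ * Nᵀ) = N * (s * (Nᵀ * N)⁻¹) * Nᵀ := by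
          simp only [mul_assoc]
      _ = N * (w * ((Nᵀ * N)⁻¹ * w)) * Nᵀ := by rw [hcenter]
      _ = N * w * (Nᵀ * N)⁻¹ * (w * Nᵀ) := by simp only [mul_assoc]
  have hYpsd : Y.PosSemidef := by
    rw [hYform]; exact hG.inv.posSemidef.mul_mul_conjTranspose_same (N * w)
  have hYsq : Y ^ 2 = N * Nᵀ + c • 1 := by
    rw [pow_two, hYdef]
    calc N * s * N⁻¹ * (N * s * N⁻¹) = N * (s * ((N⁻¹ * N) * (s * N⁻¹))) := by
          simp only [mul_assoc]
      _ = N * (s * s) * N⁻¹ := by rw [hNi1, one_mul]; simp only [mul_assoc]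
      _ = N * (Nᵀ * N) * N⁻¹ + c • (N * N⁻¹) := by
          rw [hss, mul_add, add_mul, mul_smul_comm, mul_one, smul_mul_assoc]
      _ = N * Nᵀ + c • 1 := by
          rw [hNi2, mul_assoc, mul_assoc, hNi2, mul_one]
  have hYQ : Y = hQ.sqrt := hYpsd.eq_sqrt_of_sq_eq hQ hYsq
  rw [← hYQ, hYdef, mul_assoc, mul_assoc, hNi1, mul_one]

theorem posDef_TN {d : ℕ} (N : Matrix (Fin d) (Fin d) ℝ) (hN : IsUnit N.det) :
    (Nᵀ * N).PosDef := by
  have h := posSemidef_conjTranspose_mul_self N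
  rw [conjTranspose_eq_transpose_of_trivial] at h
  have hinj := mulVec_injective_iff_isUnit.mpr ((isUnit_iff_isUnit_det N).mpr hN)
  simpa [conjTranspose_eq_transpose_of_trivial] using PosDef.conjTranspose_mul_self N hinj

theorem posDef_smul_one {d : ℕ} {c : ℝ} (hc : 0 < c) :
    ((c • 1 : Matrix (Fin d) (Fin d) ℝ)).PosDef := by
  rw [smul_one_eq_diagonal]
  exact posDef_diagonal_iff.mpr fun _ => hc

set_option maxHeartbeats 1000000 in
theorem stmt13 {d : ℕ} (A B M : Matrix (Fin d) (Fin d) ℝ) (hA : A.PosDef) (hB : B.PosDef)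
    (hM : IsUnit M.det) (ε : ℝ) (hε : 0 < ε)
    (K K' : Matrix (Fin d) (Fin d) ℝ)
    (hK : K = psqrt A * psqrt (psqrt A * (M * B * Mᵀ) * psqrt A + (ε ^ 2 / 4) • 1) *
          (psqrt A)⁻¹)
    (hK' : K' = psqrt B * psqrt (psqrt B * (Mᵀ * A * M) * psqrt B + (ε ^ 2 / 4) • 1) *
          (psqrt B)⁻¹) :
    M⁻¹ * A⁻¹ * K * A * M = K' ∧ K.trace = K'.trace := by
  have hc : (0 : ℝ) < ε ^ 2 / 4 := by positivity
  set c : ℝ := ε ^ 2 / 4 with hcdef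
  set a := hA.posSemidef.sqrt with hadef
  set b := hB.posSemidef.sqrt with hbdef
  have hpsA : psqrt A = a := dif_pos hA.posSemidef
  have hpsB : psqrt B = b := dif_pos hB.posSemidef
  have haa : a * a = A := hA.posSemidef.sqrt_mul_self
  have hbb : b * b = B := hB.posSemidef.sqrt_mul_self
  have haT : aᵀ = a := by
    rw [← conjTranspose_eq_transpose_of_trivial]; exact hA.posSemidef.posSemidef_sqrt.1
  have hbT : bᵀ = b := by
    rw [← conjTranspose_eq_transpose_of_trivial]; exact hB.posSemidef.posSemidef_sqrt.1
  have hAU : IsUnit A.det := hA.det_pos.ne'.isUnit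
  have hBU : IsUnit B.det := hB.det_pos.ne'.isUnit
  have haU : IsUnit a.det := by
    have : a.det * a.det = A.det := by rw [← det_mul, haa]
    refine isUnit_iff_ne_zero.mpr fun h0 => ?_
    rw [h0, mul_zero] at this
    exact hA.det_pos.ne' this.symm
  have hbU : IsUnit b.det := by
    have : b.det * b.det = B.det := by rw [← det_mul, hbb]
    refine isUnit_iff_ne_zero.mpr fun h0 => ?_
    rw [h0, mul_zero] at this
    exact hB.det_pos.ne' this.symm
  set N := b * Mᵀ * a with hNdef
  have hNT : Nᵀ = a * M * b := by
    rw [hNdef, transpose_mul, transpose_mul, transpose_transpose, haT, hbT, mul_assoc]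
  have hNU : IsUnit N.det := by
    rw [hNdef, det_mul, det_mul, det_transpose]
    exact (hbU.mul hM).mul haU
  have hG : (Nᵀ * N).PosDef := posDef_TN N hNU
  have hPpd : (Nᵀ * N + c • 1).PosDef :=
    Matrix.PosDef.posSemidef_add hG.posSemidef (posDef_smul_one hc)
  have hQpd : (N * Nᵀ + c • 1).PosDef := by
    have h := posSemidef_self_mul_conjTranspose N
    rw [conjTranspose_eq_transpose_of_trivial] at h
    exact Matrix.PosDef.posSemidef_add h (posDef_smul_one hc)
  have hP := hPpd.posSemidef
  have hQ := hQpd.posSemidef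
  have h1 : a * (M * B * Mᵀ) * a + c • 1 = Nᵀ * N + c • 1 := by
    rw [hNT, hNdef, ← hbb]
    simp only [Matrix.mul_assoc]
  have h2 : b * (Mᵀ * A * M) * b + c • 1 = N * Nᵀ + c • 1 := by
    rw [hNT, hNdef, ← haa]
    simp only [Matrix.mul_assoc]
  rw [hpsA, h1] at hK
  rw [hpsB, h2] at hK'
  have hpsP : psqrt (Nᵀ * N + c • 1) = hP.sqrt := dif_pos hP
  have hpsQ : psqrt (N * Nᵀ + c • 1) = hQ.sqrt := dif_pos hQ
  rw [hpsP] at hK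
  rw [hpsQ] at hK'
  set sP := hP.sqrt with hsPdef
  set sQ := hQ.sqrt with hsQdef
  have hsPT : sPᵀ = sP := by
    rw [← conjTranspose_eq_transpose_of_trivial]; exact hP.posSemidef_sqrt.1
  have hsQT : sQᵀ = sQ := by
    rw [← conjTranspose_eq_transpose_of_trivial]; exact hQ.posSemidef_sqrt.1
  have hkey : N * sP = sQ * N := key N hNU c hc hG hP hQ
  have hkeyT : sP * Nᵀ = Nᵀ * sQ := by
    rw [← hsPT, ← hsQT, ← transpose_mul, ← transpose_mul, hkey]
  -- main identity
  have hai1 : a⁻¹ * a = 1 := nonsing_inv_mul a haU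
  have hai2 : a * a⁻¹ = 1 := mul_nonsing_inv a haU
  have hbi2 : b * b⁻¹ = 1 := mul_nonsing_inv b hbU
  have hMi1 : M⁻¹ * M = 1 := nonsing_inv_mul M hM
  have hMi2 : M * M⁻¹ = 1 := mul_nonsing_inv M hM
  have hAinv : A⁻¹ = a⁻¹ * a⁻¹ := by rw [← haa, Matrix.mul_inv_rev]
  have hE : sP * (a * M) = a * M * (b * (sQ * b⁻¹)) := by
    calc sP * (a * M) = sP * (a * M * (b * b⁻¹)) := by rw [hbi2, mul_one]
      _ = sP * Nᵀ * b⁻¹ := by rw [hNT]; simp only [mul_assoc]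
      _ = Nᵀ * sQ * b⁻¹ := by rw [hkeyT]
      _ = a * M * (b * (sQ * b⁻¹)) := by rw [hNT]; simp only [mul_assoc]
  have hmain : M⁻¹ * A⁻¹ * K * A * M = K' := by
    rw [hK, hK', hAinv, ← haa]
    calc M⁻¹ * (a⁻¹ * a⁻¹) * (a * sP * a⁻¹) * (a * a) * M
        = M⁻¹ * (a⁻¹ * ((a⁻¹ * a) * (sP * ((a⁻¹ * a) * (a * M))))) := by
          simp only [mul_assoc]
      _ = M⁻¹ * (a⁻¹ * (sP * (a * M))) := by rw [hai1, one_mul, one_mul]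
      _ = M⁻¹ * (a⁻¹ * (a * (M * (b * (sQ * b⁻¹))))) := by
          rw [hE]; simp only [mul_assoc]
      _ = b * sQ * b⁻¹ := by
          rw [← mul_assoc a⁻¹ a, hai1, one_mul, ← mul_assoc M⁻¹ M, hMi1, one_mul,
            ← mul_assoc]
  refine ⟨hmain, ?_⟩
  rw [← hmain]
  have hcyc : M⁻¹ * A⁻¹ * K * A * M = (M⁻¹ * A⁻¹) * (K * (A * M)) := by
    simp only [mul_assoc]
  rw [hcyc, trace_mul_comm, mul_assoc, mul_assoc, ← mul_assoc M M⁻¹, hMi2, one_mul,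
    mul_nonsing_inv A hAU, mul_one]
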